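/- Under the hypotheses of the FWHT compressed matrix multiplication setup — n ≥ 1, b = 2^m, C = A * B for A, B : Matrix (Fin n) (Fin n) ℝ, mutually independent H1, H2 : Ω → (Fin n → Fin b) and S1, S2 : Ω → (Fin n → {-1,1}), each of H1, H2 a pairwise independent uniform family and each of S1, S2 a pairwise independent uniform family of random signs, with estimator X̃(i,j) = S1(i)·S2(j)·P[H1(i) XOR H2(j)] where P[k] = Σ_{(i',j') : H1(i') XOR H2(j') = k} S1(i')·S2(j')·C[i'][j'] — for every (i,j) and every real t > 0, Pr[|X̃(i,j) − C[i][j]| ≥ t] ≤ ‖C‖_F² / (b · t²). -/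

import Mathlib

open MeasureTheory
open scoped ENNReal ProbabilityTheory

/-- Bitwise XOR on `Fin (2^m)`. -/
def fxor {m : ℕ} (i j : Fin (2^m)) : Fin (2^m) :=
  ⟨i.val ^^^ j.val, Nat.xor_lt_two_pow i.isLt j.isLt⟩

/-- The FWHT compressed-product sketch of a matrix `C` under hash functions
`h1, h2` and sign functions `s1, s2`:
`p[k] = Σ_{h1(i') ⊕ h2(j') = k} s1(i')·s2(j')·C[i'][j']`. -/
def sketch {n m : ℕ} (C : Matrix (Fin n) (Fin n) ℝ)
    (h1 h2 : Fin n → Fin (2^m)) (s1 s2 : Fin n → ℝ) : Fin (2^m) → ℝ :=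
  fun k => ∑ p ∈ Finset.univ.filter
      (fun p : Fin n × Fin n => fxor (h1 p.1) (h2 p.2) = k),
    s1 p.1 * s2 p.2 * C p.1 p.2

/-- The decompressed estimate of entry `(i,j)`:
`s1(i)·s2(j)·p[h1(i) ⊕ h2(j)]`. -/
def estimate {n m : ℕ} (C : Matrix (Fin n) (Fin n) ℝ)
    (h1 h2 : Fin n → Fin (2^m)) (s1 s2 : Fin n → ℝ) (i j : Fin n) : ℝ :=
  s1 i * s2 j * sketch C h1 h2 s1 s2 (fxor (h1 i) (h2 j))

/-! ### Auxiliary lemmas -/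

lemma fxor_self_right {m : ℕ} (a b : Fin (2^m)) : fxor (fxor a b) b = a := by
  apply Fin.ext; simp [fxor, Nat.xor_assoc]

lemma fxor_comm' {m : ℕ} (a b : Fin (2^m)) : fxor a b = fxor b a := by
  simp [fxor, Nat.xor_comm]

lemma fxor_eq_iff {m : ℕ} (a b c : Fin (2^m)) : fxor a b = c ↔ a = fxor c b :=
  ⟨fun h => by rw [← h, fxor_self_right], fun h => by rw [h, fxor_self_right]⟩

lemma fxor_left_cancel {m : ℕ} (a b c : Fin (2^m)) : fxor a b = fxor a c ↔ b = c := by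
  constructor
  · intro h
    rw [fxor_comm', fxor_eq_iff, fxor_comm' a c, fxor_self_right] at h
    exact h
  · rintro rfl; rfl

lemma meas_eq_sum_filter {Ω γ : Type*} [MeasurableSpace Ω] [MeasurableSpace γ]
    [MeasurableSingletonClass γ] (μ : Measure Ω) (X : Ω → γ) (hX : Measurable X)
    (s : Finset γ) (hs : ∀ ω, X ω ∈ s) (P : γ → Prop) [DecidablePred P] :
    μ {ω | P (X ω)} = ∑ c ∈ s.filter P, μ (X ⁻¹' {c}) := by
  rw [← measure_biUnion_finset]
  · congr 1
    ext ω
    simp only [Set.mem_iUnion, Finset.mem_filter, Set.mem_preimage, Set.mem_singleton_iff,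
      Set.mem_setOf_eq]
    constructor
    · intro h; exact ⟨X ω, ⟨hs ω, h⟩, rfl⟩
    · rintro ⟨c, ⟨-, hc⟩, rfl⟩; exact hc
  · intro c _ d _ hcd
    simp only [Function.onFun]
    apply Set.disjoint_left.2
    rintro ω h1 h2
    exact hcd (by simp at h1 h2; rw [← h1, ← h2])
  · intro c _; exact hX (measurableSet_singleton c)

lemma real_meas_eq_sum_filter {Ω γ : Type*} [MeasurableSpace Ω] [MeasurableSpace γ]
    [MeasurableSingletonClass γ] (μ : Measure Ω) [IsFiniteMeasure μ] (X : Ω → γ)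
    (hX : Measurable X) (s : Finset γ) (hs : ∀ ω, X ω ∈ s) (P : γ → Prop) [DecidablePred P] :
    (μ {ω | P (X ω)}).toReal = ∑ c ∈ s.filter P, (μ (X ⁻¹' {c})).toReal := by
  rw [meas_eq_sum_filter μ X hX s hs P]
  exact ENNReal.toReal_sum fun _ _ => measure_ne_top μ _

lemma sum_comm_double {δ P Q : Type*} (sd : Finset δ) (sp : Finset P) (sq : Finset Q)
    (G : δ → P → Q → ℝ) :
    ∑ d ∈ sd, ∑ p ∈ sp, ∑ q ∈ sq, G d p q = ∑ p ∈ sp, ∑ q ∈ sq, ∑ d ∈ sd, G d p q := by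
  rw [Finset.sum_comm]
  exact Finset.sum_congr rfl fun p _ => Finset.sum_comm

lemma sum4_factor {α β γ δ : Type*} (sa : Finset α) (sb : Finset β) (sc : Finset γ) (sd : Finset δ)
    (wa : α → ℝ) (wb : β → ℝ) (wc : γ → ℝ) (wd : δ → ℝ) (Φ : α → β → ℝ) (Ψ : γ → ℝ) (Ξ : δ → ℝ) :
    ∑ a ∈ sa, ∑ b ∈ sb, ∑ c ∈ sc, ∑ d ∈ sd, (wa a * wb b * wc c * wd d) * (Φ a b * (Ψ c * Ξ d))
      = (∑ a ∈ sa, ∑ b ∈ sb, wa a * wb b * Φ a b)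
        * ((∑ c ∈ sc, wc c * Ψ c) * (∑ d ∈ sd, wd d * Ξ d)) := by
  rw [Finset.sum_mul]
  refine Finset.sum_congr rfl fun a _ => ?_
  rw [Finset.sum_mul]
  refine Finset.sum_congr rfl fun b _ => ?_
  rw [Finset.sum_mul_sum, Finset.mul_sum]
  refine Finset.sum_congr rfl fun c _ => ?_
  rw [Finset.mul_sum]
  refine Finset.sum_congr rfl fun d _ => ?_
  ring

lemma hash_total {Ω : Type*} [MeasureSpace Ω] [IsProbabilityMeasure (ℙ : Measure Ω)]
    {n m : ℕ} (H : Ω → Fin n → Fin (2^m)) (hmH : Measurable H) :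
    ∑ f : Fin n → Fin (2^m), (ℙ (H ⁻¹' {f})).toReal = 1 := by
  classical
  have := real_meas_eq_sum_filter (ℙ : Measure Ω) H hmH Finset.univ
    (fun ω => Finset.mem_univ _) (fun _ => True)
  simp only [Set.setOf_true, measure_univ, ENNReal.toReal_one, Finset.filter_true] at this
  exact this.symm

lemma sign_mem_piFinset {Ω : Type*} {n : ℕ} (S : Ω → Fin n → ℝ)
    (hval : ∀ ω k, S ω k ∈ ({-1, 1} : Set ℝ)) (ω : Ω) :
    S ω ∈ Fintype.piFinset (fun _ : Fin n => ({-1, 1} : Finset ℝ)) := by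
  rw [Fintype.mem_piFinset]
  intro k
  have := hval ω k
  simp only [Set.mem_insert_iff, Set.mem_singleton_iff] at this
  simp [this]

lemma sign_sq {n : ℕ} (g : Fin n → ℝ)
    (hg : g ∈ Fintype.piFinset (fun _ : Fin n => ({-1, 1} : Finset ℝ))) (k : Fin n) :
    g k * g k = 1 := by
  rw [Fintype.mem_piFinset] at hg
  have := hg k
  simp only [Finset.mem_insert, Finset.mem_singleton] at this
  rcases this with h | h <;> rw [h] <;> norm_num

lemma sign_total {Ω : Type*} [MeasureSpace Ω] [IsProbabilityMeasure (ℙ : Measure Ω)]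
    {n : ℕ} (S : Ω → Fin n → ℝ) (hmS : Measurable S)
    (hval : ∀ ω k, S ω k ∈ ({-1, 1} : Set ℝ)) :
    ∑ g ∈ Fintype.piFinset (fun _ : Fin n => ({-1, 1} : Finset ℝ)),
      (ℙ (S ⁻¹' {g})).toReal = 1 := by
  classical
  have := real_meas_eq_sum_filter (ℙ : Measure Ω) S hmS _ (sign_mem_piFinset S hval)
    (fun _ => True)
  simp only [Set.setOf_true, measure_univ, ENNReal.toReal_one, Finset.filter_true] at this
  exact this.symm

lemma hash_inner {Ω : Type*} [MeasureSpace Ω] [IsProbabilityMeasure (ℙ : Measure Ω)]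
    {n m : ℕ} (H : Ω → Fin n → Fin (2^m)) (hmH : Measurable H)
    (hunif : ∀ i u, ℙ {ω | H ω i = u} = 1 / (2^m : ℝ≥0∞))
    (hpair : ∀ i i', i ≠ i' → ∀ u v,
      ℙ {ω | H ω i = u ∧ H ω i' = v} = ℙ {ω | H ω i = u} * ℙ {ω | H ω i' = v})
    (a a' : Fin n) (hne : a ≠ a') (c : Fin (2^m) → Fin (2^m)) :
    ∑ f : Fin n → Fin (2^m), (ℙ (H ⁻¹' {f})).toReal * (if f a' = c (f a) then 1 else 0)
      = 1 / (2^m : ℝ) := by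
  classical
  have h1 : ∀ f : Fin n → Fin (2^m), (if f a' = c (f a) then (1:ℝ) else 0)
      = ∑ u : Fin (2^m), if f a = u ∧ f a' = c u then 1 else 0 := by
    intro f
    rw [Finset.sum_eq_single (f a)]
    · simp
    · intro u _ hu
      rw [if_neg]
      rintro ⟨h, -⟩
      exact hu h.symm
    · simp
  calc ∑ f : Fin n → Fin (2^m), (ℙ (H ⁻¹' {f})).toReal * (if f a' = c (f a) then 1 else 0)
      = ∑ f : Fin n → Fin (2^m), ∑ u : Fin (2^m),
          (ℙ (H ⁻¹' {f})).toReal * (if f a = u ∧ f a' = c u then 1 else 0) := by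
        refine Finset.sum_congr rfl fun f _ => ?_
        rw [h1, Finset.mul_sum]
    _ = ∑ u : Fin (2^m), ∑ f : Fin n → Fin (2^m),
          (ℙ (H ⁻¹' {f})).toReal * (if f a = u ∧ f a' = c u then 1 else 0) := Finset.sum_comm
    _ = ∑ u : Fin (2^m), (ℙ {ω | H ω a = u ∧ H ω a' = c u}).toReal := by
        refine Finset.sum_congr rfl fun u _ => ?_
        have := real_meas_eq_sum_filter (ℙ : Measure Ω) H hmH Finset.univ
          (fun ω => Finset.mem_univ _) (fun f => f a = u ∧ f a' = c u)
        rw [this, Finset.sum_filter]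
        refine Finset.sum_congr rfl fun f _ => ?_
        simp [mul_ite]
    _ = ∑ _u : Fin (2^m), ((1 : ℝ≥0∞) / 2^m * (1 / 2^m)).toReal := by
        refine Finset.sum_congr rfl fun u _ => ?_
        rw [hpair a a' hne, hunif, hunif]
    _ = 1 / (2^m : ℝ) := by
        rw [Finset.sum_const, Finset.card_univ, Fintype.card_fin]
        rw [ENNReal.toReal_mul]
        simp only [ENNReal.toReal_div, ENNReal.toReal_one, ENNReal.toReal_pow,
          ENNReal.toReal_ofNat, nsmul_eq_mul]
        have h2 : (2:ℝ)^m ≠ 0 := by positivity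
        push_cast
        field_simp

lemma sign_pair {Ω : Type*} [MeasureSpace Ω] [IsProbabilityMeasure (ℙ : Measure Ω)]
    {n : ℕ} (S : Ω → Fin n → ℝ) (hmS : Measurable S)
    (hval : ∀ ω k, S ω k ∈ ({-1, 1} : Set ℝ))
    (hunif : ∀ k, ∀ u ∈ ({-1, 1} : Set ℝ), ℙ {ω | S ω k = u} = 1 / 2)
    (hpair : ∀ k k', k ≠ k' → ∀ u v : ℝ,
      ℙ {ω | S ω k = u ∧ S ω k' = v} = ℙ {ω | S ω k = u} * ℙ {ω | S ω k' = v})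
    (htot : ∑ g ∈ Fintype.piFinset (fun _ : Fin n => ({-1, 1} : Finset ℝ)),
      (ℙ (S ⁻¹' {g})).toReal = 1)
    (a a' : Fin n) :
    ∑ g ∈ Fintype.piFinset (fun _ : Fin n => ({-1, 1} : Finset ℝ)),
      (ℙ (S ⁻¹' {g})).toReal * (g a * g a') = (if a = a' then (1:ℝ) else 0) := by
  classical
  set SS := Fintype.piFinset (fun _ : Fin n => ({-1, 1} : Finset ℝ)) with hSS
  have hpm : ∀ g ∈ SS, ∀ k, g k = -1 ∨ g k = 1 := by
    intro g hg k
    rw [hSS, Fintype.mem_piFinset] at hg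
    have := hg k
    simpa using this
  by_cases haa : a = a'
  · subst haa
    rw [if_pos rfl, ← htot]
    refine Finset.sum_congr rfl fun g hg => ?_
    rcases hpm g hg a with h | h <;> rw [h] <;> norm_num
  · rw [if_neg haa]
    have h1 : ∀ g ∈ SS, g a * g a'
        = ∑ u ∈ ({-1, 1} : Finset ℝ), ∑ v ∈ ({-1, 1} : Finset ℝ),
            if g a = u ∧ g a' = v then u * v else 0 := by
      intro g hg
      have hne : (-1 : ℝ) ≠ 1 := by norm_num
      rcases hpm g hg a with h | h <;> rcases hpm g hg a' with h' | h' <;>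
        simp [Finset.sum_pair hne, h, h'] <;> norm_num
    calc ∑ g ∈ SS, (ℙ (S ⁻¹' {g})).toReal * (g a * g a')
        = ∑ g ∈ SS, ∑ u ∈ ({-1, 1} : Finset ℝ), ∑ v ∈ ({-1, 1} : Finset ℝ),
            (ℙ (S ⁻¹' {g})).toReal * (if g a = u ∧ g a' = v then u * v else 0) := by
          refine Finset.sum_congr rfl fun g hg => ?_
          rw [h1 g hg, Finset.mul_sum]
          exact Finset.sum_congr rfl fun u _ => Finset.mul_sum _ _ _
      _ = ∑ u ∈ ({-1, 1} : Finset ℝ), ∑ v ∈ ({-1, 1} : Finset ℝ), ∑ g ∈ SS,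
            (ℙ (S ⁻¹' {g})).toReal * (if g a = u ∧ g a' = v then u * v else 0) :=
          sum_comm_double _ _ _ _
      _ = ∑ u ∈ ({-1, 1} : Finset ℝ), ∑ v ∈ ({-1, 1} : Finset ℝ),
            (u * v) * (ℙ {ω | S ω a = u ∧ S ω a' = v}).toReal := by
          refine Finset.sum_congr rfl fun u _ => Finset.sum_congr rfl fun v _ => ?_
          have := real_meas_eq_sum_filter (ℙ : Measure Ω) S hmS SS
            (sign_mem_piFinset S hval) (fun g => g a = u ∧ g a' = v)
          rw [this, Finset.mul_sum, Finset.sum_filter]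
          refine Finset.sum_congr rfl fun g _ => ?_
          split
          · ring
          · simp
      _ = ∑ u ∈ ({-1, 1} : Finset ℝ), ∑ v ∈ ({-1, 1} : Finset ℝ), (u * v) * (1/4 : ℝ) := by
          refine Finset.sum_congr rfl fun u hu => Finset.sum_congr rfl fun v hv => ?_
          have hu' : u ∈ ({-1, 1} : Set ℝ) := by simpa using hu
          have hv' : v ∈ ({-1, 1} : Set ℝ) := by simpa using hv
          rw [hpair a a' haa u v, hunif a u hu', hunif a' v hv']
          norm_num [ENNReal.toReal_mul]
      _ = 0 := by
          rw [Finset.sum_pair (show (-1:ℝ) ≠ 1 by norm_num)]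
          rw [Finset.sum_pair (show (-1:ℝ) ≠ 1 by norm_num),
            Finset.sum_pair (show (-1:ℝ) ≠ 1 by norm_num)]
          ring

lemma err_expand {n m : ℕ} (C : Matrix (Fin n) (Fin n) ℝ) (i j : Fin n)
    (f1 f2 : Fin n → Fin (2^m)) (g1 g2 : Fin n → ℝ)
    (hsq1 : ∀ k, g1 k * g1 k = 1) (hsq2 : ∀ k, g2 k * g2 k = 1) :
    estimate C f1 f2 g1 g2 i j - C i j
      = ∑ p ∈ (Finset.univ : Finset (Fin n × Fin n)).erase (i, j),
          (if fxor (f1 p.1) (f2 p.2) = fxor (f1 i) (f2 j) then (1:ℝ) else 0)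
            * (g1 i * g2 j * (g1 p.1 * g2 p.2 * C p.1 p.2)) := by
  classical
  simp only [estimate, sketch]
  rw [Finset.sum_filter, Finset.mul_sum,
    ← Finset.sum_erase_add _ _ (Finset.mem_univ (i, j))]
  have hT : g1 i * g2 j *
      (if fxor (f1 (i, j).1) (f2 (i, j).2) = fxor (f1 i) (f2 j)
        then g1 (i, j).1 * g2 (i, j).2 * C (i, j).1 (i, j).2 else 0) = C i j := by
    rw [if_pos rfl]
    show g1 i * g2 j * (g1 i * g2 j * C i j) = C i j
    calc g1 i * g2 j * (g1 i * g2 j * C i j)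
        = (g1 i * g1 i) * ((g2 j * g2 j) * C i j) := by ring
      _ = C i j := by rw [hsq1, hsq2]; ring
  rw [hT, add_sub_cancel_right]
  refine Finset.sum_congr rfl fun p _ => ?_
  split_ifs
  · ring
  · simp

lemma err_sq_expand {n m : ℕ} (C : Matrix (Fin n) (Fin n) ℝ) (i j : Fin n)
    (f1 f2 : Fin n → Fin (2^m)) (g1 g2 : Fin n → ℝ)
    (hsq1 : ∀ k, g1 k * g1 k = 1) (hsq2 : ∀ k, g2 k * g2 k = 1) :
    (estimate C f1 f2 g1 g2 i j - C i j)^2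
      = ∑ p ∈ (Finset.univ : Finset (Fin n × Fin n)).erase (i, j),
        ∑ q ∈ (Finset.univ : Finset (Fin n × Fin n)).erase (i, j),
          ((if fxor (f1 p.1) (f2 p.2) = fxor (f1 i) (f2 j) then (1:ℝ) else 0)
            * (if fxor (f1 q.1) (f2 q.2) = fxor (f1 i) (f2 j) then (1:ℝ) else 0)
            * C p.1 p.2 * C q.1 q.2)
            * ((g1 p.1 * g1 q.1) * (g2 p.2 * g2 q.2)) := by
  classical
  rw [err_expand C i j f1 f2 g1 g2 hsq1 hsq2, pow_two, Finset.sum_mul_sum]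
  refine Finset.sum_congr rfl fun p _ => Finset.sum_congr rfl fun q _ => ?_
  calc (if fxor (f1 p.1) (f2 p.2) = fxor (f1 i) (f2 j) then (1:ℝ) else 0)
          * (g1 i * g2 j * (g1 p.1 * g2 p.2 * C p.1 p.2))
          * ((if fxor (f1 q.1) (f2 q.2) = fxor (f1 i) (f2 j) then (1:ℝ) else 0)
          * (g1 i * g2 j * (g1 q.1 * g2 q.2 * C q.1 q.2)))
      = ((if fxor (f1 p.1) (f2 p.2) = fxor (f1 i) (f2 j) then (1:ℝ) else 0)
          * (if fxor (f1 q.1) (f2 q.2) = fxor (f1 i) (f2 j) then (1:ℝ) else 0)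
          * C p.1 p.2 * C q.1 q.2)
          * ((g1 p.1 * g1 q.1) * (g2 p.2 * g2 q.2)) * ((g1 i * g1 i) * (g2 j * g2 j)) := by
        ring
    _ = _ := by rw [hsq1, hsq2]; ring
theorem compressed_mm_fwht_chebyshev
    {Ω : Type*} [MeasureSpace Ω] [IsProbabilityMeasure (ℙ : Measure Ω)]
    (n m : ℕ) (hn : 0 < n)
    (A B C : Matrix (Fin n) (Fin n) ℝ) (hC : C = A * B)
    (H1 H2 : Ω → Fin n → Fin (2^m)) (S1 S2 : Ω → Fin n → ℝ)
    (hmH1 : Measurable H1) (hmH2 : Measurable H2)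
    (hmS1 : Measurable S1) (hmS2 : Measurable S2)
    -- the four random functions are mutually independent:
    (hindep : ∀ (f1 f2 : Fin n → Fin (2^m)) (g1 g2 : Fin n → ℝ),
      ℙ {ω | H1 ω = f1 ∧ H2 ω = f2 ∧ S1 ω = g1 ∧ S2 ω = g2}
        = ℙ {ω | H1 ω = f1} * ℙ {ω | H2 ω = f2} * ℙ {ω | S1 ω = g1} * ℙ {ω | S2 ω = g2})
    -- H1 and H2 are pairwise independent uniform families into Fin (2^m):
    (hH1unif : ∀ i u, ℙ {ω | H1 ω i = u} = 1 / (2^m : ℝ≥0∞))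
    (hH1pair : ∀ i i', i ≠ i' → ∀ u v,
      ℙ {ω | H1 ω i = u ∧ H1 ω i' = v} = ℙ {ω | H1 ω i = u} * ℙ {ω | H1 ω i' = v})
    (hH2unif : ∀ j u, ℙ {ω | H2 ω j = u} = 1 / (2^m : ℝ≥0∞))
    (hH2pair : ∀ j j', j ≠ j' → ∀ u v,
      ℙ {ω | H2 ω j = u ∧ H2 ω j' = v} = ℙ {ω | H2 ω j = u} * ℙ {ω | H2 ω j' = v})
    -- S1 and S2 are pairwise independent uniform families of random signs:
    (hS1val : ∀ ω i, S1 ω i ∈ ({-1, 1} : Set ℝ))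
    (hS2val : ∀ ω j, S2 ω j ∈ ({-1, 1} : Set ℝ))
    (hS1unif : ∀ i, ∀ u ∈ ({-1, 1} : Set ℝ), ℙ {ω | S1 ω i = u} = 1 / 2)
    (hS1pair : ∀ i i', i ≠ i' → ∀ u v : ℝ,
      ℙ {ω | S1 ω i = u ∧ S1 ω i' = v} = ℙ {ω | S1 ω i = u} * ℙ {ω | S1 ω i' = v})
    (hS2unif : ∀ j, ∀ u ∈ ({-1, 1} : Set ℝ), ℙ {ω | S2 ω j = u} = 1 / 2)
    (hS2pair : ∀ j j', j ≠ j' → ∀ u v : ℝ,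
      ℙ {ω | S2 ω j = u ∧ S2 ω j' = v} = ℙ {ω | S2 ω j = u} * ℙ {ω | S2 ω j' = v})
    (i j : Fin n) (t : ℝ) (ht : 0 < t) :
    ℙ {ω | t ≤ |estimate C (H1 ω) (H2 ω) (S1 ω) (S2 ω) i j - C i j|}
      ≤ ENNReal.ofReal ((∑ i' : Fin n, ∑ j' : Fin n, (C i' j')^2) / ((2^m : ℝ) * t^2)) := by
  classical
  set SS : Finset (Fin n → ℝ) := Fintype.piFinset (fun _ : Fin n => ({-1, 1} : Finset ℝ))
    with hSSdef
  -- totals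
  have htot1 : ∑ f : Fin n → Fin (2^m), (ℙ (H1 ⁻¹' {f})).toReal = 1 := hash_total H1 hmH1
  have htot2 : ∑ f : Fin n → Fin (2^m), (ℙ (H2 ⁻¹' {f})).toReal = 1 := hash_total H2 hmH2
  have htot3 : ∑ g ∈ SS, (ℙ (S1 ⁻¹' {g})).toReal = 1 := sign_total S1 hmS1 hS1val
  have htot4 : ∑ g ∈ SS, (ℙ (S2 ⁻¹' {g})).toReal = 1 := sign_total S2 hmS2 hS2val
  -- sign second moments
  have hM3 : ∀ a a' : Fin n, ∑ g ∈ SS, (ℙ (S1 ⁻¹' {g})).toReal * (g a * g a')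
      = (if a = a' then (1:ℝ) else 0) := sign_pair S1 hmS1 hS1val hS1unif hS1pair htot3
  have hM4 : ∀ a a' : Fin n, ∑ g ∈ SS, (ℙ (S2 ⁻¹' {g})).toReal * (g a * g a')
      = (if a = a' then (1:ℝ) else 0) := sign_pair S2 hmS2 hS2val hS2unif hS2pair htot4
  -- hash collision moment
  have hMh : ∀ p : Fin n × Fin n, p ≠ (i, j) →
      ∑ f1 : Fin n → Fin (2^m), ∑ f2 : Fin n → Fin (2^m),
        (ℙ (H1 ⁻¹' {f1})).toReal * (ℙ (H2 ⁻¹' {f2})).toReal *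
          (if fxor (f1 p.1) (f2 p.2) = fxor (f1 i) (f2 j) then (1:ℝ) else 0)
        = 1 / (2^m : ℝ) := by
    intro p hp
    by_cases hp1 : p.1 = i
    · have hp2 : p.2 ≠ j := fun h => hp (Prod.ext hp1 h)
      have hin := hash_inner H2 hmH2 hH2unif hH2pair j p.2 (Ne.symm hp2) (fun u => u)
      calc ∑ f1 : Fin n → Fin (2^m), ∑ f2 : Fin n → Fin (2^m),
            (ℙ (H1 ⁻¹' {f1})).toReal * (ℙ (H2 ⁻¹' {f2})).toReal *
              (if fxor (f1 p.1) (f2 p.2) = fxor (f1 i) (f2 j) then (1:ℝ) else 0)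
          = ∑ f1 : Fin n → Fin (2^m), (ℙ (H1 ⁻¹' {f1})).toReal *
              ∑ f2 : Fin n → Fin (2^m), (ℙ (H2 ⁻¹' {f2})).toReal *
                (if f2 p.2 = f2 j then (1:ℝ) else 0) := by
            refine Finset.sum_congr rfl fun f1 _ => ?_
            rw [Finset.mul_sum]
            refine Finset.sum_congr rfl fun f2 _ => ?_
            rw [hp1, if_congr (fxor_left_cancel (f1 i) (f2 p.2) (f2 j)) rfl rfl]
            ring
        _ = ∑ f1 : Fin n → Fin (2^m), (ℙ (H1 ⁻¹' {f1})).toReal * (1 / (2^m : ℝ)) := by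
            refine Finset.sum_congr rfl fun f1 _ => ?_
            rw [hin]
        _ = 1 / (2^m : ℝ) := by rw [← Finset.sum_mul, htot1, one_mul]
    · have hi : i ≠ p.1 := fun h => hp1 h.symm
      rw [Finset.sum_comm]
      calc ∑ f2 : Fin n → Fin (2^m), ∑ f1 : Fin n → Fin (2^m),
            (ℙ (H1 ⁻¹' {f1})).toReal * (ℙ (H2 ⁻¹' {f2})).toReal *
              (if fxor (f1 p.1) (f2 p.2) = fxor (f1 i) (f2 j) then (1:ℝ) else 0)
          = ∑ f2 : Fin n → Fin (2^m), (ℙ (H2 ⁻¹' {f2})).toReal * (1 / (2^m : ℝ)) := by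
            refine Finset.sum_congr rfl fun f2 _ => ?_
            have hin := hash_inner H1 hmH1 hH1unif hH1pair i p.1 hi
              (fun u => fxor (fxor u (f2 j)) (f2 p.2))
            calc ∑ f1 : Fin n → Fin (2^m),
                  (ℙ (H1 ⁻¹' {f1})).toReal * (ℙ (H2 ⁻¹' {f2})).toReal *
                    (if fxor (f1 p.1) (f2 p.2) = fxor (f1 i) (f2 j) then (1:ℝ) else 0)
                = ∑ f1 : Fin n → Fin (2^m), (ℙ (H2 ⁻¹' {f2})).toReal *
                    ((ℙ (H1 ⁻¹' {f1})).toReal *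
                      (if f1 p.1 = fxor (fxor (f1 i) (f2 j)) (f2 p.2) then (1:ℝ) else 0)) := by
                  refine Finset.sum_congr rfl fun f1 _ => ?_
                  rw [if_congr (fxor_eq_iff (f1 p.1) (f2 p.2) (fxor (f1 i) (f2 j))) rfl rfl]
                  ring
              _ = (ℙ (H2 ⁻¹' {f2})).toReal * (1 / (2^m : ℝ)) := by
                  rw [← Finset.mul_sum, hin]
        _ = 1 / (2^m : ℝ) := by rw [← Finset.sum_mul, htot2, one_mul]
  -- second moment bound
  have hRbound :
      ∑ f1 : Fin n → Fin (2^m), ∑ f2 : Fin n → Fin (2^m), ∑ g1 ∈ SS, ∑ g2 ∈ SS,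
        ((ℙ (H1 ⁻¹' {f1})).toReal * (ℙ (H2 ⁻¹' {f2})).toReal * (ℙ (S1 ⁻¹' {g1})).toReal
          * (ℙ (S2 ⁻¹' {g2})).toReal) * (estimate C f1 f2 g1 g2 i j - C i j)^2
      ≤ (∑ i' : Fin n, ∑ j' : Fin n, (C i' j')^2) / (2^m : ℝ) := by
    have hstep :
        ∑ f1 : Fin n → Fin (2^m), ∑ f2 : Fin n → Fin (2^m), ∑ g1 ∈ SS, ∑ g2 ∈ SS,
          ((ℙ (H1 ⁻¹' {f1})).toReal * (ℙ (H2 ⁻¹' {f2})).toReal * (ℙ (S1 ⁻¹' {g1})).toReal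
            * (ℙ (S2 ⁻¹' {g2})).toReal) * (estimate C f1 f2 g1 g2 i j - C i j)^2
        = ∑ p ∈ (Finset.univ : Finset (Fin n × Fin n)).erase (i, j),
            ∑ q ∈ (Finset.univ : Finset (Fin n × Fin n)).erase (i, j),
            ∑ f1 : Fin n → Fin (2^m), ∑ f2 : Fin n → Fin (2^m), ∑ g1 ∈ SS, ∑ g2 ∈ SS,
            ((ℙ (H1 ⁻¹' {f1})).toReal * (ℙ (H2 ⁻¹' {f2})).toReal * (ℙ (S1 ⁻¹' {g1})).toReal
              * (ℙ (S2 ⁻¹' {g2})).toReal) *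
            (((if fxor (f1 p.1) (f2 p.2) = fxor (f1 i) (f2 j) then (1:ℝ) else 0)
              * (if fxor (f1 q.1) (f2 q.2) = fxor (f1 i) (f2 j) then (1:ℝ) else 0)
              * C p.1 p.2 * C q.1 q.2)
              * ((g1 p.1 * g1 q.1) * (g2 p.2 * g2 q.2))) := by
      calc ∑ f1 : Fin n → Fin (2^m), ∑ f2 : Fin n → Fin (2^m), ∑ g1 ∈ SS, ∑ g2 ∈ SS,
            ((ℙ (H1 ⁻¹' {f1})).toReal * (ℙ (H2 ⁻¹' {f2})).toReal * (ℙ (S1 ⁻¹' {g1})).toReal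
              * (ℙ (S2 ⁻¹' {g2})).toReal) * (estimate C f1 f2 g1 g2 i j - C i j)^2
          = ∑ f1 : Fin n → Fin (2^m), ∑ f2 : Fin n → Fin (2^m), ∑ g1 ∈ SS, ∑ g2 ∈ SS,
              ∑ p ∈ (Finset.univ : Finset (Fin n × Fin n)).erase (i, j),
              ∑ q ∈ (Finset.univ : Finset (Fin n × Fin n)).erase (i, j),
              ((ℙ (H1 ⁻¹' {f1})).toReal * (ℙ (H2 ⁻¹' {f2})).toReal * (ℙ (S1 ⁻¹' {g1})).toReal
                * (ℙ (S2 ⁻¹' {g2})).toReal) *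
              (((if fxor (f1 p.1) (f2 p.2) = fxor (f1 i) (f2 j) then (1:ℝ) else 0)
                * (if fxor (f1 q.1) (f2 q.2) = fxor (f1 i) (f2 j) then (1:ℝ) else 0)
                * C p.1 p.2 * C q.1 q.2)
                * ((g1 p.1 * g1 q.1) * (g2 p.2 * g2 q.2))) := by
            refine Finset.sum_congr rfl fun f1 _ => Finset.sum_congr rfl fun f2 _ =>
              Finset.sum_congr rfl fun g1 hg1 => Finset.sum_congr rfl fun g2 hg2 => ?_
            rw [err_sq_expand C i j f1 f2 g1 g2 (sign_sq g1 hg1) (sign_sq g2 hg2),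
              Finset.mul_sum]
            exact Finset.sum_congr rfl fun p _ => Finset.mul_sum _ _ _
        _ = _ := by
            refine Eq.trans (Finset.sum_congr rfl fun f1 _ => Finset.sum_congr rfl fun f2 _ =>
              Finset.sum_congr rfl fun g1 _ => sum_comm_double _ _ _ _) ?_
            refine Eq.trans (Finset.sum_congr rfl fun f1 _ => Finset.sum_congr rfl fun f2 _ =>
              sum_comm_double _ _ _ _) ?_
            refine Eq.trans (Finset.sum_congr rfl fun f1 _ => sum_comm_double _ _ _ _) ?_
            exact sum_comm_double _ _ _ _
    rw [hstep]
    have hdiag : ∀ p ∈ (Finset.univ : Finset (Fin n × Fin n)).erase (i, j),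
        (∑ q ∈ (Finset.univ : Finset (Fin n × Fin n)).erase (i, j),
          ∑ f1 : Fin n → Fin (2^m), ∑ f2 : Fin n → Fin (2^m), ∑ g1 ∈ SS, ∑ g2 ∈ SS,
          ((ℙ (H1 ⁻¹' {f1})).toReal * (ℙ (H2 ⁻¹' {f2})).toReal * (ℙ (S1 ⁻¹' {g1})).toReal
            * (ℙ (S2 ⁻¹' {g2})).toReal) *
          (((if fxor (f1 p.1) (f2 p.2) = fxor (f1 i) (f2 j) then (1:ℝ) else 0)
            * (if fxor (f1 q.1) (f2 q.2) = fxor (f1 i) (f2 j) then (1:ℝ) else 0)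
            * C p.1 p.2 * C q.1 q.2)
            * ((g1 p.1 * g1 q.1) * (g2 p.2 * g2 q.2))))
        = (C p.1 p.2 * C p.1 p.2) * (1 / (2^m : ℝ)) := by
      intro p hp
      have hfac : ∀ q : Fin n × Fin n,
          (∑ f1 : Fin n → Fin (2^m), ∑ f2 : Fin n → Fin (2^m), ∑ g1 ∈ SS, ∑ g2 ∈ SS,
            ((ℙ (H1 ⁻¹' {f1})).toReal * (ℙ (H2 ⁻¹' {f2})).toReal * (ℙ (S1 ⁻¹' {g1})).toReal
              * (ℙ (S2 ⁻¹' {g2})).toReal) *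
            (((if fxor (f1 p.1) (f2 p.2) = fxor (f1 i) (f2 j) then (1:ℝ) else 0)
              * (if fxor (f1 q.1) (f2 q.2) = fxor (f1 i) (f2 j) then (1:ℝ) else 0)
              * C p.1 p.2 * C q.1 q.2)
              * ((g1 p.1 * g1 q.1) * (g2 p.2 * g2 q.2))))
          = (∑ f1 : Fin n → Fin (2^m), ∑ f2 : Fin n → Fin (2^m),
              (ℙ (H1 ⁻¹' {f1})).toReal * (ℙ (H2 ⁻¹' {f2})).toReal *
              ((if fxor (f1 p.1) (f2 p.2) = fxor (f1 i) (f2 j) then (1:ℝ) else 0)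
                * (if fxor (f1 q.1) (f2 q.2) = fxor (f1 i) (f2 j) then (1:ℝ) else 0)
                * C p.1 p.2 * C q.1 q.2))
            * ((if p.1 = q.1 then (1:ℝ) else 0) * (if p.2 = q.2 then (1:ℝ) else 0)) := by
        intro q
        rw [sum4_factor Finset.univ Finset.univ SS SS
          (fun f1 => (ℙ (H1 ⁻¹' {f1})).toReal) (fun f2 => (ℙ (H2 ⁻¹' {f2})).toReal)
          (fun g1 => (ℙ (S1 ⁻¹' {g1})).toReal) (fun g2 => (ℙ (S2 ⁻¹' {g2})).toReal)
          (fun f1 f2 => (if fxor (f1 p.1) (f2 p.2) = fxor (f1 i) (f2 j) then (1:ℝ) else 0)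
            * (if fxor (f1 q.1) (f2 q.2) = fxor (f1 i) (f2 j) then (1:ℝ) else 0)
            * C p.1 p.2 * C q.1 q.2)
          (fun g1 => g1 p.1 * g1 q.1) (fun g2 => g2 p.2 * g2 q.2), hM3 p.1 q.1, hM4 p.2 q.2]
      calc (∑ q ∈ (Finset.univ : Finset (Fin n × Fin n)).erase (i, j),
            ∑ f1 : Fin n → Fin (2^m), ∑ f2 : Fin n → Fin (2^m), ∑ g1 ∈ SS, ∑ g2 ∈ SS,
            ((ℙ (H1 ⁻¹' {f1})).toReal * (ℙ (H2 ⁻¹' {f2})).toReal * (ℙ (S1 ⁻¹' {g1})).toReal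
              * (ℙ (S2 ⁻¹' {g2})).toReal) *
            (((if fxor (f1 p.1) (f2 p.2) = fxor (f1 i) (f2 j) then (1:ℝ) else 0)
              * (if fxor (f1 q.1) (f2 q.2) = fxor (f1 i) (f2 j) then (1:ℝ) else 0)
              * C p.1 p.2 * C q.1 q.2)
              * ((g1 p.1 * g1 q.1) * (g2 p.2 * g2 q.2))))
          = ∑ q ∈ (Finset.univ : Finset (Fin n × Fin n)).erase (i, j),
              (∑ f1 : Fin n → Fin (2^m), ∑ f2 : Fin n → Fin (2^m),
                (ℙ (H1 ⁻¹' {f1})).toReal * (ℙ (H2 ⁻¹' {f2})).toReal *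
                ((if fxor (f1 p.1) (f2 p.2) = fxor (f1 i) (f2 j) then (1:ℝ) else 0)
                  * (if fxor (f1 q.1) (f2 q.2) = fxor (f1 i) (f2 j) then (1:ℝ) else 0)
                  * C p.1 p.2 * C q.1 q.2))
              * ((if p.1 = q.1 then (1:ℝ) else 0) * (if p.2 = q.2 then (1:ℝ) else 0)) :=
            Finset.sum_congr rfl fun q _ => hfac q
        _ = (∑ f1 : Fin n → Fin (2^m), ∑ f2 : Fin n → Fin (2^m),
              (ℙ (H1 ⁻¹' {f1})).toReal * (ℙ (H2 ⁻¹' {f2})).toReal *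
              ((if fxor (f1 p.1) (f2 p.2) = fxor (f1 i) (f2 j) then (1:ℝ) else 0)
                * (if fxor (f1 p.1) (f2 p.2) = fxor (f1 i) (f2 j) then (1:ℝ) else 0)
                * C p.1 p.2 * C p.1 p.2))
              * ((if p.1 = p.1 then (1:ℝ) else 0) * (if p.2 = p.2 then (1:ℝ) else 0)) := by
            refine Finset.sum_eq_single_of_mem p hp fun q _ hqp => ?_
            by_cases h1 : p.1 = q.1
            · have h2 : ¬ p.2 = q.2 := fun h => hqp (Prod.ext h1 h).symm
              simp [h2]
            · simp [h1]
        _ = (C p.1 p.2 * C p.1 p.2) * (1 / (2^m : ℝ)) := by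
            rw [if_pos rfl, if_pos rfl, mul_one, mul_one]
            have hXX : (∑ f1 : Fin n → Fin (2^m), ∑ f2 : Fin n → Fin (2^m),
                (ℙ (H1 ⁻¹' {f1})).toReal * (ℙ (H2 ⁻¹' {f2})).toReal *
                ((if fxor (f1 p.1) (f2 p.2) = fxor (f1 i) (f2 j) then (1:ℝ) else 0)
                  * (if fxor (f1 p.1) (f2 p.2) = fxor (f1 i) (f2 j) then (1:ℝ) else 0)
                  * C p.1 p.2 * C p.1 p.2))
                = (C p.1 p.2 * C p.1 p.2) *
                  (∑ f1 : Fin n → Fin (2^m), ∑ f2 : Fin n → Fin (2^m),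
                    (ℙ (H1 ⁻¹' {f1})).toReal * (ℙ (H2 ⁻¹' {f2})).toReal *
                    (if fxor (f1 p.1) (f2 p.2) = fxor (f1 i) (f2 j) then (1:ℝ) else 0)) := by
              rw [Finset.mul_sum]
              refine Finset.sum_congr rfl fun f1 _ => ?_
              rw [Finset.mul_sum]
              refine Finset.sum_congr rfl fun f2 _ => ?_
              split_ifs <;> ring
            rw [hXX, hMh p (Finset.ne_of_mem_erase hp)]
    calc ∑ p ∈ (Finset.univ : Finset (Fin n × Fin n)).erase (i, j),
          ∑ q ∈ (Finset.univ : Finset (Fin n × Fin n)).erase (i, j),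
          ∑ f1 : Fin n → Fin (2^m), ∑ f2 : Fin n → Fin (2^m), ∑ g1 ∈ SS, ∑ g2 ∈ SS,
          ((ℙ (H1 ⁻¹' {f1})).toReal * (ℙ (H2 ⁻¹' {f2})).toReal * (ℙ (S1 ⁻¹' {g1})).toReal
            * (ℙ (S2 ⁻¹' {g2})).toReal) *
          (((if fxor (f1 p.1) (f2 p.2) = fxor (f1 i) (f2 j) then (1:ℝ) else 0)
            * (if fxor (f1 q.1) (f2 q.2) = fxor (f1 i) (f2 j) then (1:ℝ) else 0)
            * C p.1 p.2 * C q.1 q.2)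
            * ((g1 p.1 * g1 q.1) * (g2 p.2 * g2 q.2)))
        = ∑ p ∈ (Finset.univ : Finset (Fin n × Fin n)).erase (i, j),
            (C p.1 p.2 * C p.1 p.2) * (1 / (2^m : ℝ)) := Finset.sum_congr rfl hdiag
      _ = (∑ p ∈ (Finset.univ : Finset (Fin n × Fin n)).erase (i, j),
            C p.1 p.2 * C p.1 p.2) * (1 / (2^m : ℝ)) := (Finset.sum_mul _ _ _).symm
      _ ≤ (∑ p : Fin n × Fin n, C p.1 p.2 * C p.1 p.2) * (1 / (2^m : ℝ)) := by
          apply mul_le_mul_of_nonneg_right _ (by positivity)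
          exact Finset.sum_le_sum_of_subset_of_nonneg (Finset.erase_subset _ _)
            (fun q _ _ => mul_self_nonneg _)
      _ = (∑ i' : Fin n, ∑ j' : Fin n, (C i' j')^2) / (2^m : ℝ) := by
          rw [mul_one_div]
          congr 1
          rw [Fintype.sum_prod_type]
          exact Finset.sum_congr rfl fun i' _ => Finset.sum_congr rfl fun j' _ =>
            (pow_two _).symm
  -- Chebyshev step
  have hmX : Measurable fun ω => (H1 ω, H2 ω, S1 ω, S2 ω) :=
    hmH1.prodMk (hmH2.prodMk (hmS1.prodMk hmS2))
  have hsT : ∀ ω, (H1 ω, H2 ω, S1 ω, S2 ω)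
      ∈ ((Finset.univ : Finset (Fin n → Fin (2^m)))
          ×ˢ (Finset.univ : Finset (Fin n → Fin (2^m))) ×ˢ SS ×ˢ SS) := by
    intro ω
    simp only [Finset.mem_product]
    exact ⟨Finset.mem_univ _, Finset.mem_univ _, sign_mem_piFinset S1 hS1val ω,
      sign_mem_piFinset S2 hS2val ω⟩
  have hbad : ℙ {ω | t ≤ |estimate C (H1 ω) (H2 ω) (S1 ω) (S2 ω) i j - C i j|}
      = ∑ x ∈ (((Finset.univ : Finset (Fin n → Fin (2^m)))
          ×ˢ (Finset.univ : Finset (Fin n → Fin (2^m))) ×ˢ SS ×ˢ SS).filter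
          (fun x : (Fin n → Fin (2^m)) × (Fin n → Fin (2^m)) × (Fin n → ℝ) × (Fin n → ℝ) =>
            t ≤ |estimate C x.1 x.2.1 x.2.2.1 x.2.2.2 i j - C i j|)),
        ℙ ((fun ω => (H1 ω, H2 ω, S1 ω, S2 ω)) ⁻¹' {x}) :=
    meas_eq_sum_filter ℙ _ hmX _ hsT
      (fun x => t ≤ |estimate C x.1 x.2.1 x.2.2.1 x.2.2.2 i j - C i j|)
  have hW : ∀ (f1 f2 : Fin n → Fin (2^m)) (g1 g2 : Fin n → ℝ),
      (ℙ ((fun ω => (H1 ω, H2 ω, S1 ω, S2 ω)) ⁻¹' {(f1, f2, g1, g2)})).toReal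
        = (ℙ (H1 ⁻¹' {f1})).toReal * (ℙ (H2 ⁻¹' {f2})).toReal * (ℙ (S1 ⁻¹' {g1})).toReal
          * (ℙ (S2 ⁻¹' {g2})).toReal := by
    intro f1 f2 g1 g2
    have hset : ((fun ω => (H1 ω, H2 ω, S1 ω, S2 ω)) ⁻¹' {(f1, f2, g1, g2)})
        = {ω | H1 ω = f1 ∧ H2 ω = f2 ∧ S1 ω = g1 ∧ S2 ω = g2} := by
      ext ω
      simp [Prod.ext_iff]
    rw [hset, hindep f1 f2 g1 g2, ENNReal.toReal_mul, ENNReal.toReal_mul, ENNReal.toReal_mul]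
    rfl
  have hne : ℙ {ω | t ≤ |estimate C (H1 ω) (H2 ω) (S1 ω) (S2 ω) i j - C i j|} ≠ ⊤ :=
    measure_ne_top _ _
  rw [← ENNReal.ofReal_toReal hne]
  apply ENNReal.ofReal_le_ofReal
  have htR : (ℙ {ω | t ≤ |estimate C (H1 ω) (H2 ω) (S1 ω) (S2 ω) i j - C i j|}).toReal
      ≤ ((∑ i' : Fin n, ∑ j' : Fin n, (C i' j')^2) / (2^m : ℝ)) / t^2 := by
    calc (ℙ {ω | t ≤ |estimate C (H1 ω) (H2 ω) (S1 ω) (S2 ω) i j - C i j|}).toReal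
        = ∑ x ∈ (((Finset.univ : Finset (Fin n → Fin (2^m)))
            ×ˢ (Finset.univ : Finset (Fin n → Fin (2^m))) ×ˢ SS ×ˢ SS).filter
            (fun x : (Fin n → Fin (2^m)) × (Fin n → Fin (2^m)) × (Fin n → ℝ) × (Fin n → ℝ) =>
              t ≤ |estimate C x.1 x.2.1 x.2.2.1 x.2.2.2 i j - C i j|)),
          (ℙ ((fun ω => (H1 ω, H2 ω, S1 ω, S2 ω)) ⁻¹' {x})).toReal := by
          rw [hbad]
          exact ENNReal.toReal_sum fun _ _ => measure_ne_top _ _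
      _ ≤ ∑ x ∈ (((Finset.univ : Finset (Fin n → Fin (2^m)))
            ×ˢ (Finset.univ : Finset (Fin n → Fin (2^m))) ×ˢ SS ×ˢ SS).filter
            (fun x : (Fin n → Fin (2^m)) × (Fin n → Fin (2^m)) × (Fin n → ℝ) × (Fin n → ℝ) =>
              t ≤ |estimate C x.1 x.2.1 x.2.2.1 x.2.2.2 i j - C i j|)),
          (ℙ ((fun ω => (H1 ω, H2 ω, S1 ω, S2 ω)) ⁻¹' {x})).toReal
            * ((estimate C x.1 x.2.1 x.2.2.1 x.2.2.2 i j - C i j)^2 / t^2) := by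
          refine Finset.sum_le_sum fun x hx => ?_
          have hx2 := (Finset.mem_filter.1 hx).2
          have ht2 : t^2 ≤ (estimate C x.1 x.2.1 x.2.2.1 x.2.2.2 i j - C i j)^2 := by
            have h3 := pow_le_pow_left₀ ht.le hx2 2
            rwa [sq_abs] at h3
          exact le_mul_of_one_le_right ENNReal.toReal_nonneg
            ((one_le_div (by positivity)).2 ht2)
      _ ≤ ∑ x ∈ ((Finset.univ : Finset (Fin n → Fin (2^m)))
            ×ˢ (Finset.univ : Finset (Fin n → Fin (2^m))) ×ˢ SS ×ˢ SS),
          (ℙ ((fun ω => (H1 ω, H2 ω, S1 ω, S2 ω)) ⁻¹' {x})).toReal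
            * ((estimate C x.1 x.2.1 x.2.2.1 x.2.2.2 i j - C i j)^2 / t^2) :=
          Finset.sum_le_sum_of_subset_of_nonneg (Finset.filter_subset _ _)
            (fun x _ _ => mul_nonneg ENNReal.toReal_nonneg
              (div_nonneg (sq_nonneg _) (sq_nonneg _)))
      _ = (∑ x ∈ ((Finset.univ : Finset (Fin n → Fin (2^m)))
            ×ˢ (Finset.univ : Finset (Fin n → Fin (2^m))) ×ˢ SS ×ˢ SS),
          (ℙ ((fun ω => (H1 ω, H2 ω, S1 ω, S2 ω)) ⁻¹' {x})).toReal
            * (estimate C x.1 x.2.1 x.2.2.1 x.2.2.2 i j - C i j)^2) / t^2 := by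
          rw [Finset.sum_div]
          exact Finset.sum_congr rfl fun x _ => (mul_div_assoc _ _ _).symm
      _ ≤ ((∑ i' : Fin n, ∑ j' : Fin n, (C i' j')^2) / (2^m : ℝ)) / t^2 := by
          apply div_le_div_of_nonneg_right ?_ (by positivity)
          have hconv : ∑ x ∈ ((Finset.univ : Finset (Fin n → Fin (2^m)))
                ×ˢ (Finset.univ : Finset (Fin n → Fin (2^m))) ×ˢ SS ×ˢ SS),
              (ℙ ((fun ω => (H1 ω, H2 ω, S1 ω, S2 ω)) ⁻¹' {x})).toReal
                * (estimate C x.1 x.2.1 x.2.2.1 x.2.2.2 i j - C i j)^2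
              = ∑ f1 : Fin n → Fin (2^m), ∑ f2 : Fin n → Fin (2^m), ∑ g1 ∈ SS, ∑ g2 ∈ SS,
                ((ℙ (H1 ⁻¹' {f1})).toReal * (ℙ (H2 ⁻¹' {f2})).toReal
                  * (ℙ (S1 ⁻¹' {g1})).toReal * (ℙ (S2 ⁻¹' {g2})).toReal)
                  * (estimate C f1 f2 g1 g2 i j - C i j)^2 := by
            rw [Finset.sum_product]
            refine Finset.sum_congr rfl fun f1 _ => ?_
            rw [Finset.sum_product]
            refine Finset.sum_congr rfl fun f2 _ => ?_
            rw [Finset.sum_product]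
            refine Finset.sum_congr rfl fun g1 _ => ?_
            refine Finset.sum_congr rfl fun g2 _ => ?_
            rw [hW f1 f2 g1 g2]
          rw [hconv]
          exact hRbound
  calc (ℙ {ω | t ≤ |estimate C (H1 ω) (H2 ω) (S1 ω) (S2 ω) i j - C i j|}).toReal
      ≤ ((∑ i' : Fin n, ∑ j' : Fin n, (C i' j')^2) / (2^m : ℝ)) / t^2 := htR
    _ = (∑ i' : Fin n, ∑ j' : Fin n, (C i' j')^2) / ((2^m : ℝ) * t^2) := div_div _ _ _
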